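/- Let (X, d) be a proper metric space (the closure of C + r is compact for every compact C ⊆ X and every r > 0), and let f_1, …, f_N : X → X be continuous maps. Then the induced map F : H(X) → H(X), defined by F(B) = f_1(B) ∪ … ∪ f_N(B), is continuous with respect to the Hausdorff metric. -/

import Mathlib

open TopologicalSpace

/-- The set `S + r = {y : ∃ x ∈ S, d(x,y) < r}`. -/
def plusSet {Y : Type*} [MetricSpace Y] (S : Set Y) (r : ℝ) : Set Y :=
  {y | ∃ x ∈ S, dist x y < r}

/-- The map `B ↦ f₁(B) ∪ ⋯ ∪ f_N(B)` induced by an IFS on the space of nonempty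
compact subsets. -/
noncomputable def ifsMap {X : Type*} [MetricSpace X] {N : ℕ} [NeZero N]
    (f : Fin N → X → X) (hf : ∀ n, Continuous (f n))
    (B : NonemptyCompacts X) : NonemptyCompacts X :=
  ⟨⟨⋃ n, f n '' (B : Set X), isCompact_iUnion fun n => B.isCompact.image (hf n)⟩,
    ⟨f 0 B.nonempty.choose,
      Set.mem_iUnion.2 ⟨0, Set.mem_image_of_mem _ B.nonempty.choose_spec⟩⟩⟩

/-- If `(X, d)` is a proper metric space (the closure of `C + r` is
compact for every compact `C` and `r > 0`) and `f₁, …, f_N : X → X` are continuous, then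
the induced map `F : H(X) → H(X)`, `F(B) = f₁(B) ∪ ⋯ ∪ f_N(B)`, is continuous with
respect to the Hausdorff metric. -/
theorem ifsMap_continuous_of_locally_compact
    {X : Type*} [MetricSpace X] {N : ℕ} [NeZero N]
    (hX : ∀ C : Set X, IsCompact C → ∀ r : ℝ, 0 < r → IsCompact (closure (plusSet C r)))
    (f : Fin N → X → X) (hf : ∀ n, Continuous (f n)) :
    Continuous (ifsMap f hf) := by
  rw [Metric.continuous_iff]
  intro B ε εpos
  -- the compact "thickening" of B
  set K : Set X := closure (plusSet (B : Set X) 1) with hK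
  have hKc : IsCompact K := hX _ B.isCompact 1 one_pos
  have hBK : (B : Set X) ⊆ K := fun x hx =>
    subset_closure ⟨x, hx, by simp⟩
  -- uniform continuity of each f n on K
  have huc : ∀ n : Fin N, ∃ δ > 0, ∀ x ∈ K, ∀ y ∈ K,
      dist x y < δ → dist (f n x) (f n y) < ε / 2 := fun n =>
    Metric.uniformContinuousOn_iff.1
      (hKc.uniformContinuousOn_of_continuous ((hf n).continuousOn)) (ε / 2) (half_pos εpos)
  choose δ δpos hδ using huc
  have hNe : (Finset.univ : Finset (Fin N)).Nonempty := Finset.univ_nonempty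
  set δ₀ : ℝ := min 1 (Finset.univ.inf' hNe δ) with hδ₀
  have δ₀pos : 0 < δ₀ := lt_min one_pos ((Finset.lt_inf'_iff hNe).2 fun n _ => δpos n)
  have δ₀le : ∀ n : Fin N, δ₀ ≤ δ n := fun n =>
    le_trans (min_le_right _ _) (Finset.inf'_le _ (Finset.mem_univ n))
  refine ⟨δ₀, δ₀pos, fun A hA => ?_⟩
  have hAB : Metric.hausdorffDist (A : Set X) (B : Set X) < δ₀ := hA
  have hfin : EMetric.hausdorffEdist (A : Set X) (B : Set X) ≠ ⊤ :=
    Metric.hausdorffEdist_ne_top_of_nonempty_of_bounded A.nonempty B.nonempty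
      A.isCompact.isBounded B.isCompact.isBounded
  have hfin' : EMetric.hausdorffEdist (B : Set X) (A : Set X) ≠ ⊤ := by
    exact Metric.hausdorffEdist_ne_top_of_nonempty_of_bounded B.nonempty A.nonempty
      B.isCompact.isBounded A.isCompact.isBounded
  -- A ⊆ K
  have hAK : (A : Set X) ⊆ K := by
    intro a ha
    obtain ⟨b, hb, hab⟩ := Metric.exists_dist_lt_of_hausdorffDist_lt ha hAB hfin
    exact subset_closure ⟨b, hb, by
      rw [dist_comm]; exact lt_of_lt_of_le hab (min_le_left _ _)⟩
  have key : Metric.hausdorffDist (ifsMap f hf A : Set X) (ifsMap f hf B : Set X) ≤ ε / 2 := by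
    apply Metric.hausdorffDist_le_of_mem_dist (le_of_lt (half_pos εpos))
    · intro x hx
      obtain ⟨n, a, ha, rfl⟩ := Set.mem_iUnion.1 (show x ∈ ⋃ n, f n '' (A : Set X) from hx)
      obtain ⟨b, hb, hab⟩ := Metric.exists_dist_lt_of_hausdorffDist_lt ha hAB hfin
      refine ⟨f n b, Set.mem_iUnion.2 ⟨n, Set.mem_image_of_mem _ hb⟩, ?_⟩
      exact le_of_lt (hδ n a (hAK ha) b (hBK hb) (lt_of_lt_of_le hab (δ₀le n)))
    · intro x hx
      obtain ⟨n, b, hb, rfl⟩ := Set.mem_iUnion.1 (show x ∈ ⋃ n, f n '' (B : Set X) from hx)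
      obtain ⟨a, ha, hba⟩ := Metric.exists_dist_lt_of_hausdorffDist_lt' hb hAB hfin
      refine ⟨f n a, Set.mem_iUnion.2 ⟨n, Set.mem_image_of_mem _ ha⟩, ?_⟩
      rw [dist_comm]
      exact le_of_lt (hδ n a (hAK ha) b (hBK hb) (lt_of_lt_of_le hba (δ₀le n)))
  calc dist (ifsMap f hf A) (ifsMap f hf B)
      = Metric.hausdorffDist (ifsMap f hf A : Set X) (ifsMap f hf B : Set X) := rfl
    _ ≤ ε / 2 := key
    _ < ε := half_lt_self εpos
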